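/- Let A be a B₁-algebra, J a saturated ideal of A, and y ∈ A with y ∉ J. Suppose P := C_y(J) is a maximal element (for inclusion) of the set of J-conductors, i.e., for every x ∉ J, if C_y(J) ⊆ C_x(J) then C_y(J) = C_x(J). Then P is a prime ideal of A. -/

import Mathlib

/-- An ideal `I` of a `B₁`-algebra is *saturated* if `y ∈ I` and `x + y = y` imply `x ∈ I`. -/
def IsSaturated {A : Type*} [CommSemiring A] (I : Ideal A) : Prop :=
  ∀ x y : A, y ∈ I → x + y = y → x ∈ I

/-- The conductor ideal `C_x(J) = {y | x * y ∈ J}`. -/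
def conductorI {A : Type*} [CommSemiring A] (x : A) (J : Ideal A) : Ideal A where
  carrier := {y | x * y ∈ J}
  zero_mem' := by simp
  add_mem' := by
    intro a b ha hb
    simpa [mul_add] using J.add_mem ha hb
  smul_mem' := by
    intro c y hy
    simp only [smul_eq_mul, Set.mem_setOf_eq] at *
    rw [mul_left_comm]
    exact J.mul_mem_left c hy

/-- In a `B₁`-algebra, if `J` is a saturated ideal, `y ∉ J`, and `C_y(J)` is maximal among
the `J`-conductors, then `C_y(J)` is a prime ideal. -/
theorem maximal_conductor_isPrime {A : Type*} [CommSemiring A] (hchar : (1 : A) + 1 = 1)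
    (J : Ideal A) (hJsat : IsSaturated J) (y : A) (hy : y ∉ J)
    (hmax : ∀ x : A, x ∉ J → conductorI y J ≤ conductorI x J →
      conductorI y J = conductorI x J) :
    (conductorI y J).IsPrime := by
  constructor
  · intro h
    have : (1:A) ∈ conductorI y J := h ▸ Submodule.mem_top
    have : y * 1 ∈ J := this
    rw [mul_one] at this
    exact hy this
  · intro a b hab
    by_cases ha : a ∈ conductorI y J
    · exact Or.inl ha
    · right
      have hya : y * a ∉ J := ha
      have hle : conductorI y J ≤ conductorI (y * a) J := by
        intro z hz
        show y * a * z ∈ J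
        rw [mul_right_comm]
        exact J.mul_mem_right a hz
      have heq := hmax (y * a) hya hle
      have hb : b ∈ conductorI (y * a) J := by
        show y * a * b ∈ J
        rw [mul_assoc]; exact hab
      rw [heq]
      exact hb
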